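/- Let S be the unilateral shift on ℓ²(ℕ) and let λ, μ ∈ ℂ with λ ≠ μ. Then λI + S and μI + S are not similar: there is no invertible bounded operator V on ℓ²(ℕ) with V(λI + S) = (μI + S)V. Consequently the Kronecker representations (H^λ, f^λ) with f^λ_α = I, f^λ_β = λI + S, for λ ∈ ℂ, form an uncountable family of pairwise non-isomorphic indecomposable Hilbert representations of the Kronecker quiver. -/

import Mathlib

open scoped ComplexConjugate Pointwise

noncomputable section StmtAux
private def ee (n : ℕ) : lp (fun _ : ℕ => ℂ) 2 := lp.single 2 n 1
private lemma ee_apply (n m : ℕ) : (ee n) m = if m = n then 1 else 0 := by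
  by_cases h : m = n
  · subst h; simp [ee, lp.single_apply_self]
  · simp [ee, lp.single_apply_ne _ _ _ h, h]
private def coordL (n : ℕ) : lp (fun _ : ℕ => ℂ) 2 →L[ℂ] ℂ := innerSL ℂ (ee n)
private lemma coordL_apply (n : ℕ) (x : lp (fun _ : ℕ => ℂ) 2) : coordL n x = x n := by
  simp [coordL, ee, lp.inner_single_left, RCLike.inner_apply]
private lemma single_eq_smul (n : ℕ) (c : ℂ) :
    lp.single 2 n c = c • ee n := by
  rw [ee, ← lp.single_smul]; simp
private lemma clm_ext {F : Type*} [NormedAddCommGroup F] [NormedSpace ℂ F]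
    (A B : lp (fun _ : ℕ => ℂ) 2 →L[ℂ] F)
    (h : ∀ n, A (ee n) = B (ee n)) : A = B := by
  ext x
  have hx : HasSum (fun n => lp.single 2 n (x n)) x :=
    lp.hasSum_single (by norm_num) x
  have hA := A.hasSum hx
  have hB := B.hasSum hx
  refine hA.unique ?_
  convert hB using 2 with n
  rw [single_eq_smul, map_smul, map_smul, h n]

variable {S : lp (fun _ : ℕ => ℂ) 2 →L[ℂ] lp (fun _ : ℕ => ℂ) 2}

private lemma S_coord_zero (hS : ∀ n : ℕ, S (lp.single 2 n (1 : ℂ)) = lp.single 2 (n + 1) (1 : ℂ))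
    (x : lp (fun _ : ℕ => ℂ) 2) : (S x) 0 = 0 := by
  have h : (coordL 0).comp S = 0 := by
    apply clm_ext
    intro k
    have : S (ee k) = ee (k + 1) := hS k
    simp [ContinuousLinearMap.comp_apply, this, coordL_apply, ee_apply]
  have := DFunLike.congr_fun h x
  simpa [coordL_apply] using this

private lemma S_coord_succ (hS : ∀ n : ℕ, S (lp.single 2 n (1 : ℂ)) = lp.single 2 (n + 1) (1 : ℂ))
    (x : lp (fun _ : ℕ => ℂ) 2) (n : ℕ) : (S x) (n + 1) = x n := by
  have h : (coordL (n + 1)).comp S = coordL n := by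
    apply clm_ext
    intro k
    have : S (ee k) = ee (k + 1) := hS k
    simp [ContinuousLinearMap.comp_apply, this, coordL_apply, ee_apply]
  have := DFunLike.congr_fun h x
  simpa [coordL_apply] using this

private lemma idem_trivial
    (hS : ∀ n : ℕ, S (lp.single 2 n (1 : ℂ)) = lp.single 2 (n + 1) (1 : ℂ))
    (T : lp (fun _ : ℕ => ℂ) 2 →L[ℂ] lp (fun _ : ℕ => ℂ) 2)
    (hT2 : T ∘L T = T) (hTS : T ∘L S = S ∘L T) : T = 0 ∨ T = 1 := by
  set x : lp (fun _ : ℕ => ℂ) 2 := T (ee 0) with hxdef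
  have hSe : ∀ k : ℕ, S (ee k) = ee (k + 1) := hS
  have hTScomm : ∀ y, T (S y) = S (T y) := fun y => DFunLike.congr_fun hTS y
  have hTe : ∀ k n, (T (ee k)) n = if k ≤ n then x (n - k) else 0 := by
    intro k
    induction k with
    | zero => intro n; simp [hxdef]
    | succ k ih =>
      intro n
      have h1 : T (ee (k + 1)) = S (T (ee k)) := by
        rw [← hSe k, hTScomm]
      cases n with
      | zero =>
        rw [h1]
        simp [S_coord_zero hS]
      | succ m =>
        rw [h1, S_coord_succ hS, ih m]
        simp only [Nat.add_le_add_iff_right, Nat.succ_sub_succ]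
  have hTx : T x = x := by
    have := DFunLike.congr_fun hT2 (ee 0)
    simpa using this
  have hconv : ∀ n, x n = ∑ k ∈ Finset.range (n + 1), x k * x (n - k) := by
    intro n
    have hx : HasSum (fun k => lp.single 2 k (x k)) x :=
      lp.hasSum_single (by norm_num) x
    have h1 : HasSum (fun k => ((coordL n).comp T) (lp.single 2 k (x k)))
        (((coordL n).comp T) x) := ((coordL n).comp T).hasSum hx
    have h2 : (fun k => ((coordL n).comp T) (lp.single 2 k (x k)))
        = fun k => if k ≤ n then x k * x (n - k) else 0 := by
      funext k
      rw [single_eq_smul]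
      simp only [ContinuousLinearMap.comp_apply, map_smul, coordL_apply, smul_eq_mul,
        hTe k n]
      split_ifs <;> ring
    have hval : ((coordL n).comp T) x = x n := by
      simp [ContinuousLinearMap.comp_apply, hTx, coordL_apply]
    rw [h2, hval] at h1
    have h4 : HasSum (fun k => if k ≤ n then x k * x (n - k) else 0)
        (∑ k ∈ Finset.range (n + 1), if k ≤ n then x k * x (n - k) else 0) := by
      apply hasSum_sum_of_ne_finset_zero
      intro k hk
      simp only [Finset.mem_range, not_lt] at hk
      rw [if_neg (by omega)]
    rw [h1.unique h4]
    apply Finset.sum_congr rfl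
    intro k hk
    simp only [Finset.mem_range] at hk
    rw [if_pos (by omega)]
  have h0 : x 0 * x 0 = x 0 := by
    have := hconv 0; simpa using this.symm
  have hx0 : x 0 = 0 ∨ x 0 = 1 := by
    have h : x 0 * (x 0 - 1) = 0 := by linear_combination h0
    rcases mul_eq_zero.mp h with h | h
    · exact Or.inl h
    · exact Or.inr (by linear_combination h)
  have hzero : ∀ n, 0 < n → x n = 0 := by
    intro n
    induction n using Nat.strong_induction_on with
    | _ n IH =>
      intro hn
      have hsum := hconv n
      have hsplit : ∑ k ∈ Finset.range (n + 1), x k * x (n - k)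
          = x 0 * x n + x n * x 0 := by
        rw [Finset.sum_range_succ]
        have hlast : x n * x (n - n) = x n * x 0 := by simp
        rw [hlast]
        congr 1
        have hterm : ∀ k ∈ Finset.range n, x k * x (n - k)
            = if k = 0 then x 0 * x n else 0 := by
          intro k hk
          simp only [Finset.mem_range] at hk
          by_cases h : k = 0
          · subst h; simp
          · rw [if_neg h, IH k hk (Nat.pos_of_ne_zero h), zero_mul]
        rw [Finset.sum_congr rfl hterm, Finset.sum_ite_eq' (Finset.range n) 0
          (fun _ => x 0 * x n), if_pos (Finset.mem_range.mpr hn)]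
      rw [hsplit] at hsum
      rcases hx0 with h | h
      · rw [h] at hsum; linear_combination hsum
      · rw [h] at hsum; linear_combination -hsum
  rcases hx0 with h | h
  · left
    have hx : x = 0 := by
      apply lp.ext
      funext n
      cases n with
      | zero => simpa using h
      | succ m => simpa using hzero (m + 1) (Nat.succ_pos m)
    apply clm_ext
    intro n
    induction n with
    | zero =>
      simp only [ContinuousLinearMap.zero_apply]
      exact hx
    | succ k ih =>
      rw [← hSe k, hTScomm, ih]
      simp
  · right
    have hx : x = ee 0 := by
      apply lp.ext
      funext n
      cases n with
      | zero => rw [h]; rw [show ((ee 0 : lp (fun _ : ℕ => ℂ) 2) 0) = 1 by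
          rw [ee_apply]; simp]
      | succ m => rw [hzero (m + 1) (Nat.succ_pos m)]; rw [ee_apply]; simp
    apply clm_ext
    intro n
    induction n with
    | zero =>
      simp only [ContinuousLinearMap.one_apply]
      exact hx
    | succ k ih =>
      rw [← hSe k, hTScomm, ih]
      simpa using hSe k


private lemma no_translate {K : Set ℂ} (hK : IsCompact K) (hne : K.Nonempty) {c : ℂ}
    (hc : c ≠ 0) (h : ({c} : Set ℂ) + K = K) : False := by
  obtain ⟨z₀, hz₀K, hmax⟩ := hK.exists_isMaxOn hne
    ((Complex.continuous_re.comp (continuous_mul_right ((starRingEnd ℂ) c))).continuousOn)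
  have hmem : c + z₀ ∈ K := by
    rw [← h]; exact Set.add_mem_add rfl hz₀K
  have hle : ((c + z₀) * (starRingEnd ℂ) c).re ≤ (z₀ * (starRingEnd ℂ) c).re := hmax hmem
  rw [add_mul, Complex.add_re] at hle
  have hpos : 0 < (c * (starRingEnd ℂ) c).re := by
    rw [Complex.mul_conj]
    simpa [Complex.normSq_pos] using hc
  linarith

private lemma not_similar
    (S : lp (fun _ : ℕ => ℂ) 2 →L[ℂ] lp (fun _ : ℕ => ℂ) 2)
    (l m : ℂ) (hlm : l ≠ m)
    (V : lp (fun _ : ℕ => ℂ) 2 →L[ℂ] lp (fun _ : ℕ => ℂ) 2) (hV : IsUnit V)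
    (heq : V ∘L (l • (1 : lp (fun _ : ℕ => ℂ) 2 →L[ℂ] lp (fun _ : ℕ => ℂ) 2) + S) =
          (m • (1 : lp (fun _ : ℕ => ℂ) 2 →L[ℂ] lp (fun _ : ℕ => ℂ) 2) + S) ∘L V) :
    False := by
  haveI : Nontrivial (lp (fun _ : ℕ => ℂ) 2) := by
    refine ⟨lp.single 2 0 (1 : ℂ), 0, fun h => ?_⟩
    have := congrFun (congrArg (fun f : lp (fun _ : ℕ => ℂ) 2 => (f : ∀ _ : ℕ, ℂ)) h) 0
    simp [lp.single_apply_self] at this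
  obtain ⟨u, rfl⟩ := hV
  have heq' : (u : lp (fun _ : ℕ => ℂ) 2 →L[ℂ] lp (fun _ : ℕ => ℂ) 2) * (l • 1 + S)
      = (m • 1 + S) * (u : lp (fun _ : ℕ => ℂ) 2 →L[ℂ] lp (fun _ : ℕ => ℂ) 2) := by
    rw [ContinuousLinearMap.mul_def, ContinuousLinearMap.mul_def]
    exact heq
  have hconj : (m • (1 : lp (fun _ : ℕ => ℂ) 2 →L[ℂ] lp (fun _ : ℕ => ℂ) 2) + S)
      = (u : lp (fun _ : ℕ => ℂ) 2 →L[ℂ] lp (fun _ : ℕ => ℂ) 2) * (l • 1 + S) * ((u⁻¹ : (lp (fun _ : ℕ => ℂ) 2 →L[ℂ] lp (fun _ : ℕ => ℂ) 2)ˣ) : lp (fun _ : ℕ => ℂ) 2 →L[ℂ] lp (fun _ : ℕ => ℂ) 2) := by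
    rw [heq', mul_assoc]
    simp
  have hspec : spectrum ℂ (m • (1 : lp (fun _ : ℕ => ℂ) 2 →L[ℂ] lp (fun _ : ℕ => ℂ) 2) + S)
      = spectrum ℂ (l • (1 : lp (fun _ : ℕ => ℂ) 2 →L[ℂ] lp (fun _ : ℕ => ℂ) 2) + S) := by
    rw [hconj, spectrum.units_conjugate]
  have hsm : (m • (1 : lp (fun _ : ℕ => ℂ) 2 →L[ℂ] lp (fun _ : ℕ => ℂ) 2))
      = algebraMap ℂ _ m := (Algebra.algebraMap_eq_smul_one m).symm
  have hsl : (l • (1 : lp (fun _ : ℕ => ℂ) 2 →L[ℂ] lp (fun _ : ℕ => ℂ) 2))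
      = algebraMap ℂ _ l := (Algebra.algebraMap_eq_smul_one l).symm
  rw [hsm, hsl] at hspec
  set K := spectrum ℂ (algebraMap ℂ (lp (fun _ : ℕ => ℂ) 2 →L[ℂ] lp (fun _ : ℕ => ℂ) 2) l + S) with hK
  have htrans : ({m - l} : Set ℂ) + K = K := by
    rw [hK, spectrum.singleton_add_eq, ← add_assoc, ← map_add, sub_add_cancel]
    exact hspec
  exact no_translate (spectrum.isCompact _) (spectrum.nonempty _)
    (sub_ne_zero.mpr (Ne.symm hlm)) htrans

end StmtAux

/-- **Uncountably many non-isomorphic indecomposable Kronecker representations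
`(I, λI + S)`.**
Here `S` is the unilateral shift on `ℓ²(ℕ)`.  For `λ ≠ μ`: (1) `λI + S` and `μI + S` are
not similar (no invertible bounded `V` with `V (λI + S) = (μI + S) V`); (2) consequently
the representations `(H^λ,f^λ)` and `(H^μ,f^μ)` are not isomorphic; and (3) each
representation `(H^λ,f^λ)` is indecomposable.  Thus the `(H^λ,f^λ)`, `λ ∈ ℂ`, form an
uncountable family of pairwise non-isomorphic indecomposable representations. -/
theorem stmt_10
    (S : lp (fun _ : ℕ => ℂ) 2 →L[ℂ] lp (fun _ : ℕ => ℂ) 2)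
    (hS : ∀ n : ℕ, S (lp.single 2 n (1 : ℂ)) = lp.single 2 (n + 1) (1 : ℂ)) :
    (∀ l m : ℂ, l ≠ m →
      ¬ ∃ V : lp (fun _ : ℕ => ℂ) 2 →L[ℂ] lp (fun _ : ℕ => ℂ) 2, IsUnit V ∧
        V ∘L (l • (1 : lp (fun _ : ℕ => ℂ) 2 →L[ℂ] lp (fun _ : ℕ => ℂ) 2) + S) =
          (m • (1 : lp (fun _ : ℕ => ℂ) 2 →L[ℂ] lp (fun _ : ℕ => ℂ) 2) + S) ∘L V)
    ∧
    (∀ l m : ℂ, l ≠ m →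
      ¬ ∃ φ₁ φ₂ : lp (fun _ : ℕ => ℂ) 2 →L[ℂ] lp (fun _ : ℕ => ℂ) 2,
        IsUnit φ₁ ∧ IsUnit φ₂ ∧
        φ₂ ∘L (1 : lp (fun _ : ℕ => ℂ) 2 →L[ℂ] lp (fun _ : ℕ => ℂ) 2) =
          (1 : lp (fun _ : ℕ => ℂ) 2 →L[ℂ] lp (fun _ : ℕ => ℂ) 2) ∘L φ₁ ∧
        φ₂ ∘L (l • (1 : lp (fun _ : ℕ => ℂ) 2 →L[ℂ] lp (fun _ : ℕ => ℂ) 2) + S) =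
          (m • (1 : lp (fun _ : ℕ => ℂ) 2 →L[ℂ] lp (fun _ : ℕ => ℂ) 2) + S) ∘L φ₁)
    ∧
    (∀ l : ℂ, ∀ T₁ T₂ : lp (fun _ : ℕ => ℂ) 2 →L[ℂ] lp (fun _ : ℕ => ℂ) 2,
      T₁ ∘L T₁ = T₁ → T₂ ∘L T₂ = T₂ →
      T₂ ∘L (1 : lp (fun _ : ℕ => ℂ) 2 →L[ℂ] lp (fun _ : ℕ => ℂ) 2) =
        (1 : lp (fun _ : ℕ => ℂ) 2 →L[ℂ] lp (fun _ : ℕ => ℂ) 2) ∘L T₁ →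
      T₂ ∘L (l • (1 : lp (fun _ : ℕ => ℂ) 2 →L[ℂ] lp (fun _ : ℕ => ℂ) 2) + S) =
        (l • (1 : lp (fun _ : ℕ => ℂ) 2 →L[ℂ] lp (fun _ : ℕ => ℂ) 2) + S) ∘L T₁ →
      (T₁ = 0 ∧ T₂ = 0) ∨ (T₁ = 1 ∧ T₂ = 1)) := by
  refine ⟨?_, ?_, ?_⟩
  · rintro l m hlm ⟨V, hV, heq⟩
    exact not_similar S l m hlm V hV heq
  · rintro l m hlm ⟨φ₁, φ₂, h1, h2, h3, h4⟩
    have h21 : φ₂ = φ₁ := by simpa [ContinuousLinearMap.one_def] using h3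
    rw [h21] at h4
    exact not_similar S l m hlm φ₁ h1 h4
  · intro l T₁ T₂ hT1 hT2 h12 hcomm
    have h21 : T₂ = T₁ := by simpa [ContinuousLinearMap.one_def] using h12
    rw [h21] at hcomm
    have hTS : T₁ ∘L S = S ∘L T₁ := by
      have h := hcomm
      simp only [ContinuousLinearMap.add_comp, ContinuousLinearMap.comp_add,
        ContinuousLinearMap.smul_comp, ContinuousLinearMap.comp_smul,
        ContinuousLinearMap.one_def, ContinuousLinearMap.comp_id,
        ContinuousLinearMap.id_comp] at h
      exact add_left_cancel h
    rcases idem_trivial hS T₁ hT1 hTS with h | h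
    · exact Or.inl ⟨h, h21.trans h⟩
    · exact Or.inr ⟨h, h21.trans h⟩
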